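/- arXiv:1604.00454 — 2 statements merged into one kernel-verified Lean document; each statement's English description precedes it below -/
import Mathlib

section
/- Let A_1,…,A_n be l×l matrices over a field F such that A_iA_j = A_jA_i for all i, j and A_i − A_j is invertible for all i ≠ j. Set B_i = (∏_{j≠i}(A_j − A_i))^{−1} for i = 1,…,n (the product taken in any order; all factors commute and are invertible). Then for every integer t with 0 ≤ t ≤ n − 2, one has ∑_{i=1}^n A_i^t B_i = 0. -/
open Finset

section Key
variable {R : Type*} [CommRing R] {ι : Type*} [DecidableEq ι] (a : ι → R)

noncomputable def cprod (s : Finset ι) (i : ι) : R :=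
  ∏ j ∈ s.erase i, Ring.inverse (a j - a i)

noncomputable def dsum (s : Finset ι) (t : ℕ) : R :=
  ∑ i ∈ s, a i ^ t * cprod a s i

lemma cprod_erase {s : Finset ι} {p i : ι} (hp : p ∈ s) (hip : i ≠ p) :
    cprod a s i = Ring.inverse (a p - a i) * cprod a (s.erase p) i := by
  unfold cprod
  rw [Finset.erase_right_comm]
  exact (Finset.mul_prod_erase _ _ (Finset.mem_erase.2 ⟨Ne.symm hip, hp⟩)).symm

lemma cprod_erase_self (s : Finset ι) (p : ι) :
    cprod a (s.erase p) p = cprod a s p := by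
  unfold cprod
  rw [Finset.erase_idem]

lemma rec_step {s : Finset ι} (hs : ∀ i ∈ s, ∀ j ∈ s, i ≠ j → IsUnit (a j - a i))
    {p q : ι} (hp : p ∈ s) (hq : q ∈ s) (hpq : p ≠ q) (t : ℕ) :
    (a p - a q) * dsum a s t = dsum a (s.erase p) t - dsum a (s.erase q) t := by
  have key : ∀ i ∈ s,
      (a p - a q) * (a i ^ t * cprod a s i)
        = (a i ^ t * cprod a (s.erase p) i
            - (if i = p then a p ^ t * cprod a s p else 0))
          - (a i ^ t * cprod a (s.erase q) i
            - (if i = q then a q ^ t * cprod a s q else 0)) := by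
    intro i hi
    by_cases hip : i = p
    · subst hip
      simp only [eq_self_iff_true, if_true, if_neg hpq, cprod_erase_self]
      have h1 : Ring.inverse (a q - a i) * (a q - a i) = 1 :=
        Ring.inverse_mul_cancel _ (hs i hi q hq hpq)
      rw [cprod_erase a hq hpq]
      linear_combination (-(a i ^ t * cprod a (s.erase q) i)) * h1
    · by_cases hiq : i = q
      · subst hiq
        simp only [eq_self_iff_true, if_true, if_neg hip, cprod_erase_self]
        have h1 : Ring.inverse (a p - a i) * (a p - a i) = 1 :=
          Ring.inverse_mul_cancel _ (hs i hi p hp hip)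
        rw [cprod_erase a hp hip]
        linear_combination (a i ^ t * cprod a (s.erase p) i) * h1
      · simp only [if_neg hip, if_neg hiq]
        have h1 : Ring.inverse (a p - a i) * (a p - a i) = 1 :=
          Ring.inverse_mul_cancel _ (hs i hi p hp hip)
        have h2 : Ring.inverse (a q - a i) * (a q - a i) = 1 :=
          Ring.inverse_mul_cancel _ (hs i hi q hq hiq)
        have e1 : cprod a s i
            = Ring.inverse (a p - a i) * (Ring.inverse (a q - a i)
              * cprod a ((s.erase p).erase q) i) := by
          rw [cprod_erase a hp hip, cprod_erase a (Finset.mem_erase.2 ⟨Ne.symm hpq, hq⟩) hiq]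
        have e2 : cprod a (s.erase p) i
            = Ring.inverse (a q - a i) * cprod a ((s.erase p).erase q) i := by
          rw [cprod_erase a (Finset.mem_erase.2 ⟨Ne.symm hpq, hq⟩) hiq]
        have e3 : cprod a (s.erase q) i
            = Ring.inverse (a p - a i) * cprod a ((s.erase p).erase q) i := by
          rw [cprod_erase a (Finset.mem_erase.2 ⟨hpq, hp⟩) hip, Finset.erase_right_comm]
        rw [e1, e2, e3]
        set P := cprod a ((s.erase p).erase q) i
        linear_combination (a i ^ t * P * Ring.inverse (a q - a i)) * h1
          - (a i ^ t * P * Ring.inverse (a p - a i)) * h2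
  unfold dsum
  rw [Finset.sum_erase_eq_sub hp, Finset.sum_erase_eq_sub hq, Finset.mul_sum,
    Finset.sum_congr rfl key, Finset.sum_sub_distrib, Finset.sum_sub_distrib,
    Finset.sum_sub_distrib, Finset.sum_ite_eq' s p, Finset.sum_ite_eq' s q,
    if_pos hp, if_pos hq, cprod_erase_self, cprod_erase_self]

lemma dsum_eval (s : Finset ι) (hs : ∀ i ∈ s, ∀ j ∈ s, i ≠ j → IsUnit (a j - a i)) :
    (∀ t, t + 2 ≤ s.card → dsum a s t = 0) ∧
    (s.Nonempty → dsum a s (s.card - 1) = (-1 : R) ^ (s.card - 1)) := by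
  induction s using Finset.strongInduction with
  | _ s IH =>
  have hpart1 : ∀ t, t + 2 ≤ s.card → dsum a s t = 0 := by
    intro t ht
    have h2 : 1 < s.card := by omega
    obtain ⟨p, hp, q, hq, hpq⟩ := Finset.one_lt_card.mp h2
    have hu : IsUnit (a p - a q) := hs q hq p hp (Ne.symm hpq)
    have hrec := rec_step a hs hp hq hpq t
    have hsub : ∀ r : ι, r ∈ s →
        ∀ x ∈ s.erase r, ∀ y ∈ s.erase r, x ≠ y → IsUnit (a y - a x) :=
      fun r _ x hx y hy hxy =>
        hs x (Finset.mem_of_mem_erase hx) y (Finset.mem_of_mem_erase hy) hxy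
    have hcardp : (s.erase p).card = s.card - 1 := Finset.card_erase_of_mem hp
    have hcardq : (s.erase q).card = s.card - 1 := Finset.card_erase_of_mem hq
    have hzero : dsum a (s.erase p) t - dsum a (s.erase q) t = 0 := by
      rcases eq_or_lt_of_le ht with heq | hlt
      · have htp : t = (s.erase p).card - 1 := by omega
        have htq : t = (s.erase q).card - 1 := by omega
        rw [htp, (IH _ (Finset.erase_ssubset hp) (hsub p hp)).2
            (Finset.card_pos.mp (by omega)), ← htp, htq,
          (IH _ (Finset.erase_ssubset hq) (hsub q hq)).2
            (Finset.card_pos.mp (by omega)), ← htq]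
        ring
      · rw [(IH _ (Finset.erase_ssubset hp) (hsub p hp)).1 t (by omega),
          (IH _ (Finset.erase_ssubset hq) (hsub q hq)).1 t (by omega)]
        ring
    rw [hzero] at hrec
    calc dsum a s t
        = (Ring.inverse (a p - a q) * (a p - a q)) * dsum a s t := by
          rw [Ring.inverse_mul_cancel _ hu, one_mul]
      _ = Ring.inverse (a p - a q) * ((a p - a q) * dsum a s t) := by ring
      _ = 0 := by rw [hrec, mul_zero]
  refine ⟨hpart1, fun hne => ?_⟩
  rcases eq_or_lt_of_le (Finset.one_le_card.mpr hne) with h1 | h2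
  · obtain ⟨p, hp⟩ := Finset.card_eq_one.mp h1.symm
    subst hp
    simp [dsum, cprod]
  · obtain ⟨p, hp⟩ := hne
    have hsplit : ∀ i ∈ s, a i ^ (s.card - 1) * cprod a s i
        = a i ^ (s.card - 2) * (a i - a p) * cprod a s i
          + a p * (a i ^ (s.card - 2) * cprod a s i) := by
      intro i hi
      have : s.card - 1 = (s.card - 2) + 1 := by omega
      rw [this, pow_succ]
      ring
    have hterm : ∀ i ∈ s, a i ^ (s.card - 2) * (a i - a p) * cprod a s i
        = (if i = p then 0 else -(a i ^ (s.card - 2) * cprod a (s.erase p) i)) := by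
      intro i hi
      by_cases hip : i = p
      · subst hip; simp
      · rw [if_neg hip, cprod_erase a hp hip]
        have h1 : Ring.inverse (a p - a i) * (a p - a i) = 1 :=
          Ring.inverse_mul_cancel _ (hs i hi p hp hip)
        linear_combination (-(a i ^ (s.card - 2) * cprod a (s.erase p) i)) * h1
    have hd2 : dsum a s (s.card - 2) = 0 := hpart1 _ (by omega)
    have hd1 : dsum a (s.erase p) ((s.erase p).card - 1)
        = (-1 : R) ^ ((s.erase p).card - 1) := by
      refine (IH _ (Finset.erase_ssubset hp) ?_).2 ?_
      · exact fun x hx y hy hxy =>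
          hs x (Finset.mem_of_mem_erase hx) y (Finset.mem_of_mem_erase hy) hxy
      · exact Finset.card_pos.mp (by rw [Finset.card_erase_of_mem hp]; omega)
    have hcard : (s.erase p).card = s.card - 1 := Finset.card_erase_of_mem hp
    calc dsum a s (s.card - 1)
        = ∑ i ∈ s, (a i ^ (s.card - 2) * (a i - a p) * cprod a s i
            + a p * (a i ^ (s.card - 2) * cprod a s i)) :=
          Finset.sum_congr rfl hsplit
      _ = (∑ i ∈ s, (if i = p then 0
            else -(a i ^ (s.card - 2) * cprod a (s.erase p) i)))
          + a p * dsum a s (s.card - 2) := by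
          rw [Finset.sum_add_distrib, ← Finset.mul_sum, dsum]
          exact congrArg (· + _) (Finset.sum_congr rfl hterm)
      _ = -(∑ i ∈ s.erase p, a i ^ (s.card - 2) * cprod a (s.erase p) i) := by
          rw [hd2, mul_zero, add_zero]
          have hre : ∀ i ∈ s, (if i = p then 0
              else -(a i ^ (s.card - 2) * cprod a (s.erase p) i))
              = -(a i ^ (s.card - 2) * cprod a (s.erase p) i)
                + (if i = p then a i ^ (s.card - 2) * cprod a (s.erase p) i else 0) := by
            intro i _
            by_cases hip : i = p <;> simp [hip]
          rw [Finset.sum_congr rfl hre, Finset.sum_add_distrib, Finset.sum_ite_eq' s p,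
            if_pos hp, Finset.sum_erase_eq_sub hp, Finset.sum_neg_distrib]
          ring
      _ = -dsum a (s.erase p) ((s.erase p).card - 1) := by
          have hcc : s.card - 2 = (s.erase p).card - 1 := by omega
          rw [hcc]
          rfl
      _ = (-1 : R) ^ (s.card - 1) := by
          rw [hd1, hcard]
          obtain ⟨k, hk⟩ : ∃ k, s.card - 1 = k + 1 := ⟨s.card - 2, by omega⟩
          rw [hk]
          norm_num [pow_succ]
end Key

lemma aux_syzygy {R : Type*} [CommRing R] {n : ℕ} (a b : Fin n → R)
    (hb : ∀ i, b i * ∏ j ∈ Finset.univ.erase i, (a j - a i) = 1)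
    (t : ℕ) (ht : t + 2 ≤ n) : ∑ i, a i ^ t * b i = 0 := by
  classical
  have hu : ∀ i ∈ (Finset.univ : Finset (Fin n)), ∀ j ∈ (Finset.univ : Finset (Fin n)),
      i ≠ j → IsUnit (a j - a i) := by
    intro i _ j _ hij
    have hjmem : j ∈ Finset.univ.erase i := Finset.mem_erase.2 ⟨Ne.symm hij, Finset.mem_univ j⟩
    refine IsUnit.of_mul_eq_one (b i * ∏ k ∈ (Finset.univ.erase i).erase j, (a k - a i)) ?_
    calc (a j - a i) * (b i * ∏ k ∈ (Finset.univ.erase i).erase j, (a k - a i))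
        = b i * ((a j - a i) * ∏ k ∈ (Finset.univ.erase i).erase j, (a k - a i)) := by ring
      _ = b i * ∏ j ∈ Finset.univ.erase i, (a j - a i) := by
          rw [Finset.mul_prod_erase _ (fun k => a k - a i) hjmem]
      _ = 1 := hb i
  have hcp : ∀ i, cprod a Finset.univ i = b i := by
    intro i
    have h1 : cprod a Finset.univ i * ∏ j ∈ Finset.univ.erase i, (a j - a i) = 1 := by
      unfold cprod
      rw [← Finset.prod_mul_distrib,
        Finset.prod_congr rfl (fun j hj => Ring.inverse_mul_cancel _
          (hu i (Finset.mem_univ i) j (Finset.mem_univ j)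
            (Ne.symm (Finset.ne_of_mem_erase hj))))]
      exact Finset.prod_const_one
    calc cprod a Finset.univ i
        = cprod a Finset.univ i * (b i * ∏ j ∈ Finset.univ.erase i, (a j - a i)) := by
          rw [hb i, mul_one]
      _ = b i * (cprod a Finset.univ i * ∏ j ∈ Finset.univ.erase i, (a j - a i)) := by ring
      _ = b i := by rw [h1, mul_one]
  have hmain : dsum a Finset.univ t = 0 :=
    (dsum_eval a Finset.univ hu).1 t (by simpa using ht)
  rw [← hmain]
  unfold dsum
  exact Finset.sum_congr rfl (fun i _ => by rw [hcp i])

set_option synthInstance.maxHeartbeats 1000000 in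
set_option maxHeartbeats 1000000 in
/-- For pairwise commuting matrices `A_1,…,A_n` with invertible pairwise
differences, the matrices `B_i = (∏_{j≠i}(A_j - A_i))⁻¹` satisfy
`∑_i A_i^t B_i = 0` for every `0 ≤ t ≤ n - 2`. -/
theorem block_vandermonde_syzygy
    (F : Type*) [Field F] (l n : ℕ) (hn : 2 ≤ n)
    (A : Fin n → Matrix (Fin l) (Fin l) F)
    (hcomm : ∀ i j, A i * A j = A j * A i)
    (hdiff : ∀ i j, i ≠ j → IsUnit (A i - A j))
    (B : Fin n → Matrix (Fin l) (Fin l) F)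
    (hB : ∀ i : Fin n,
      B i * (Finset.univ.erase i).noncommProd (fun j => A j - A i)
        (fun a _ b _ _ =>
          Commute.sub_right (Commute.sub_left (hcomm a b) (hcomm i b))
            (Commute.sub_left (hcomm a i) (hcomm i i))) = 1) :
    ∀ t ≤ n - 2, ∑ i, A i ^ t * B i = 0 := by
  intro t ht
  classical
  have hcomm' : ∀ i j : Fin n, Commute (A i) (A j) := fun i j => hcomm i j
  let u : Fin n → Matrix (Fin l) (Fin l) F := fun i =>
    (Finset.univ.erase i).noncommProd (fun j => A j - A i)
      (fun a _ b _ _ =>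
        Commute.sub_right (Commute.sub_left (hcomm' a b) (hcomm' i b))
          (Commute.sub_left (hcomm' a i) (hcomm' i i)))
  have hBu : ∀ i, B i * u i = 1 := hB
  have hUnit : ∀ i, IsUnit (u i) := fun i =>
    Finset.noncommProd_induction _ _ _ IsUnit (fun x y hx hy => hx.mul hy) isUnit_one
      (fun j hj => hdiff j i (Finset.ne_of_mem_erase hj))
  have hAu : ∀ k i, Commute (A k) (u i) := fun k i =>
    Finset.noncommProd_commute _ _ _ _
      (fun j _ => Commute.sub_right (hcomm' k j) (hcomm' k i))
  have vB : ∀ i, ∃ v : (Matrix (Fin l) (Fin l) F)ˣ, (v : Matrix (Fin l) (Fin l) F) = u i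
      ∧ B i = ((v⁻¹ : _ˣ) : Matrix (Fin l) (Fin l) F) := by
    intro i
    obtain ⟨v, hv⟩ := hUnit i
    exact ⟨v, hv, Units.eq_inv_of_mul_eq_one_right (by rw [hv]; exact hBu i)⟩
  have hAB : ∀ k i, Commute (A k) (B i) := by
    intro k i
    obtain ⟨v, hv, hBv⟩ := vB i
    rw [hBv]
    exact Commute.units_inv_right (by rw [hv]; exact hAu k i)
  have huA : ∀ i k, Commute (u i) (A k) := fun i k => (hAu k i).symm
  have huu : ∀ i j, Commute (u i) (u j) := fun i j =>
    Finset.noncommProd_commute _ _ _ _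
      (fun k _ => Commute.sub_right (huA i k) (huA i j))
  have hBB : ∀ i j, Commute (B i) (B j) := by
    intro i j
    obtain ⟨v, hv, hBv⟩ := vB i
    obtain ⟨w, hw, hBw⟩ := vB j
    rw [hBv, hBw]
    exact Commute.units_inv_right (Commute.units_inv_left (by rw [hv, hw]; exact huu i j))
  set gens : Set (Matrix (Fin l) (Fin l) F) := Set.range A ∪ Set.range B with hgens
  have hgen : ∀ x ∈ gens, ∀ y ∈ gens, x * y = y * x := by
    rintro x (⟨i, rfl⟩ | ⟨i, rfl⟩) y (⟨j, rfl⟩ | ⟨j, rfl⟩)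
    · exact hcomm i j
    · exact (hAB i j).eq
    · exact (hAB j i).eq.symm
    · exact (hBB i j).eq
  letI : CommRing (Algebra.adjoin F gens) := Algebra.adjoinCommRingOfComm F hgen
  let a' : Fin n → (Algebra.adjoin F gens) :=
    fun i => ⟨A i, Algebra.subset_adjoin (Or.inl ⟨i, rfl⟩)⟩
  let b' : Fin n → (Algebra.adjoin F gens) :=
    fun i => ⟨B i, Algebra.subset_adjoin (Or.inr ⟨i, rfl⟩)⟩
  have hb' : ∀ i, b' i * ∏ j ∈ Finset.univ.erase i, (a' j - a' i) = 1 := by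
    intro i
    have hprod : (∏ j ∈ Finset.univ.erase i, (a' j - a' i))
        = (Finset.univ.erase i).noncommProd (fun j => a' j - a' i)
          (fun _ _ _ _ _ => Commute.all _ _) :=
      (Finset.noncommProd_eq_prod _ _).symm
    rw [hprod]
    apply Subtype.val_injective
    show (B i) * (((Finset.univ.erase i).noncommProd (fun j => a' j - a' i)
      (fun _ _ _ _ _ => Commute.all _ _) : Algebra.adjoin F gens)
        : Matrix (Fin l) (Fin l) F) = 1
    have hval : (((Finset.univ.erase i).noncommProd (fun j => a' j - a' i)
        (fun _ _ _ _ _ => Commute.all _ _) : Algebra.adjoin F gens)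
          : Matrix (Fin l) (Fin l) F) = u i := by
      show (Algebra.adjoin F gens).val ((Finset.univ.erase i).noncommProd
        (fun j => a' j - a' i) (fun _ _ _ _ _ => Commute.all _ _)) = u i
      rw [Finset.map_noncommProd (Finset.univ.erase i) (fun j => a' j - a' i)
        (fun _ _ _ _ _ => Commute.all _ _) (Algebra.adjoin F gens).val]
      exact Finset.noncommProd_congr rfl (fun j _ => by rw [map_sub]; rfl) _
    rw [hval]
    exact hBu i
  have hz := aux_syzygy a' b' hb' t (by omega)
  have hz' := congrArg (Algebra.adjoin F gens).val hz
  rw [map_sum, map_zero] at hz'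
  calc ∑ i, A i ^ t * B i
      = ∑ i, (Algebra.adjoin F gens).val (a' i ^ t * b' i) :=
        Finset.sum_congr rfl (fun i _ => by rw [map_mul, map_pow]; rfl)
    _ = 0 := hz'
end

section
/- The code C of Construction 7 has the d-optimal repair property: for every node index i ∈ {1,…,n} and every subset R ⊆ {1,…,n}∖{i} with |R| = d, there exist F-linear maps φ_j : F^l → F^{l/s} for j ∈ R such that any two codewords (C_1,…,C_n) and (C'_1,…,C'_n) in C satisfying φ_j(C_j) = φ_j(C'_j) for all j ∈ R also satisfy C_i = C'_i. (Thus node i is recoverable by downloading l/s = l/(d+1−k) field symbols from each of any d helper nodes, meeting the cut-set bound, over any field with at least n+1 elements and with subpacketization l = s^{n−1}.) -/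
open Matrix

namespace C7aux

/-- cyclic addition on `Fin s` -/
def af {s : ℕ} (x : Fin s) (t : ℕ) : Fin s := ⟨(x.val + t) % s, Nat.mod_lt _ x.pos⟩

lemma af_zero {s : ℕ} (x : Fin s) : af x 0 = x := by
  apply Fin.ext; simp [af, Nat.mod_eq_of_lt x.isLt]

lemma af_af {s : ℕ} (x : Fin s) (u t : ℕ) : af (af x u) t = af x (u + t) := by
  apply Fin.ext; simp [af, Nat.mod_add_mod, Nat.add_assoc]

lemma af_val {s : ℕ} (x : Fin s) (t : ℕ) : (af x t).val = (x.val + t) % s := rfl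

/-- a covering function from `Fin L` onto a finset of card ≤ L -/
lemma exists_cover {α : Type*} [DecidableEq α] [Nonempty α] (S : Finset α) {L : ℕ}
    (h : S.card ≤ L) : ∃ g : Fin L → α, ∀ x ∈ S, ∃ k, g k = x := by
  classical
  refine ⟨fun k => S.toList.getD k (Classical.arbitrary α), ?_⟩
  intro x hx
  have hmem : x ∈ S.toList := Finset.mem_toList.2 hx
  obtain ⟨idx, hidx, hget⟩ := List.mem_iff_getElem.1 hmem
  have hlen : S.toList.length = S.card := Finset.length_toList S
  refine ⟨⟨idx, by omega⟩, ?_⟩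
  show S.toList.getD idx (Classical.arbitrary α) = x
  rw [List.getD_eq_getElem?_getD, List.getElem?_eq_getElem hidx]
  simpa using hget

lemma mulVec_sum' {F : Type*} [Field F] {I : Type*} [Fintype I] [DecidableEq I]
    {J : Type*} (S : Finset J) (M : Matrix I I F) (w : J → I → F) :
    M *ᵥ (∑ j ∈ S, w j) = ∑ j ∈ S, M *ᵥ (w j) := by
  funext a
  simp only [Matrix.mulVec, dotProduct, Finset.sum_apply, Finset.mul_sum]
  exact Finset.sum_comm

lemma matrix_eq_of_mulVec {F : Type*} [Field F] {I : Type*} [Fintype I] [DecidableEq I]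
    (M N : Matrix I I F) (h : ∀ v, M *ᵥ v = N *ᵥ v) : M = N := by
  ext a b
  have := congrFun (h (Pi.single b 1)) a
  simpa [Matrix.mulVec_single] using this


section Abstract

variable {F : Type*} [Field F] {I : Type*} [Fintype I] [DecidableEq I] [Nonempty I]
variable {n s r L' : ℕ}

/-- abstract repair lemma: commuting family `B` with `B i = 1`,
scalar `s`-th powers on the non-helper nodes, and a "monomial-row"
collapse structure on helper nodes. -/
lemma abstract_repair
    (B : Fin n → Matrix I I F) (i : Fin n) (R : Finset (Fin n)) (hiR : i ∉ R)
    (hcomm : ∀ j j', B j * B j' = B j' * B j)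
    (hBi : B i = 1)
    (hN : ∀ j ∈ Finset.univ \ insert i R,
        ∃ c : F, B j ^ s = c • (1 : Matrix I I F) ∧ c ≠ 1)
    (fold2 : Fin n → I → I) (c : I → ℕ) (hc : ∀ b, c b < s)
    (hrow : ∀ j ∈ R, ∀ b : I, ∃ σ : F,
        ∀ v : I → F, ((B j ^ (c b)) *ᵥ v) b = σ * v (fold2 j b))
    (hcard : ∀ j ∈ R, (Finset.image (fun b => fold2 j b) Finset.univ).card ≤ L')
    (hsm : s + (Finset.univ \ insert i R).card ≤ r) :
    ∃ φ : Fin n → ((I → F) →ₗ[F] (Fin L' → F)),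
      ∀ D : Fin n → I → F,
        (∀ t < r, ∑ j, (B j ^ t) *ᵥ D j = 0) →
        (∀ j ∈ R, φ j (D j) = 0) → D i = 0 := by
  classical
  set Nset : Finset (Fin n) := Finset.univ \ insert i R with hNset
  set lst : List (Fin n) := Nset.toList with hlst
  -- the eliminating products
  set P : Fin n → Matrix I I F := fun j => ((lst.map fun j' => B j - B j').prod) with hP
  have hcomm' : ∀ j j', Commute (B j) (B j') := fun j j' => hcomm j j'
  -- commutation of B j ^ m with P j
  have hcommP : ∀ (j : Fin n) (m : ℕ), Commute ((B j) ^ m) (P j) := by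
    intro j m
    apply Commute.pow_left
    apply Commute.list_prod_right
    intro y hy
    obtain ⟨j', _, rfl⟩ := List.mem_map.1 hy
    exact (Commute.refl _).sub_right (hcomm' j j')
  -- the covering functions
  have hg : ∀ j, j ∈ R → ∃ g : Fin L' → I,
      ∀ x ∈ (Finset.image (fun b => fold2 j b) Finset.univ), ∃ k, g k = x :=
    fun j hj => exists_cover _ (hcard j hj)
  choose g hgspec using hg
  -- the repair maps
  refine ⟨fun j => if hj : j ∈ R then
      (LinearMap.pi fun k => (LinearMap.proj (g j hj k)).comp ((P j).mulVecLin)) else 0, ?_⟩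
  intro D hchecks hzero
  -- Step 1 : elimination
  have E1 : ∀ (Lst : List (Fin n)) (t : ℕ), t + Lst.length < r →
      ∑ j, (((Lst.map fun j' => B j - B j').prod * B j ^ t) *ᵥ D j) = 0 := by
    intro Lst
    induction Lst with
    | nil =>
      intro t ht
      simpa using hchecks t (by simpa using ht)
    | cons j'' Ltl ih =>
      intro t ht
      have hlen : t + (Ltl.length + 1) < r := by simpa [List.length_cons] using ht
      have hcommtl : ∀ j : Fin n, Commute (B j) ((Ltl.map fun j' => B j - B j').prod) := by
        intro j
        apply Commute.list_prod_right
        intro y hy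
        obtain ⟨j', _, rfl⟩ := List.mem_map.1 hy
        exact (Commute.refl _).sub_right (hcomm' j j')
      have hexp : ∀ j : Fin n,
          ((((j'' :: Ltl).map fun j' => B j - B j').prod * B j ^ t) *ᵥ D j)
            = (((Ltl.map fun j' => B j - B j').prod * B j ^ (t+1)) *ᵥ D j)
              - (B j'' *ᵥ (((Ltl.map fun j' => B j - B j').prod * B j ^ t) *ᵥ D j)) := by
        intro j
        rw [List.map_cons, List.prod_cons, mul_assoc, sub_mul, Matrix.sub_mulVec,
          Matrix.mulVec_mulVec]
        congr 2
        rw [← mul_assoc, (hcommtl j).eq, mul_assoc, ← pow_succ']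
      have hsum1 : ∑ j, (((j'' :: Ltl).map fun j' => B j - B j').prod * B j ^ t) *ᵥ D j
          = (∑ j, ((Ltl.map fun j' => B j - B j').prod * B j ^ (t+1)) *ᵥ D j)
            - ∑ j, (B j'' *ᵥ (((Ltl.map fun j' => B j - B j').prod * B j ^ t) *ᵥ D j)) := by
        rw [← Finset.sum_sub_distrib]
        exact Finset.sum_congr rfl fun j _ => hexp j
      have hsum2 : ∑ j, (B j'' *ᵥ (((Ltl.map fun j' => B j - B j').prod * B j ^ t) *ᵥ D j))
          = B j'' *ᵥ (∑ j, ((Ltl.map fun j' => B j - B j').prod * B j ^ t) *ᵥ D j) := by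
        exact (mulVec_sum' Finset.univ (B j'')
          (fun j => ((Ltl.map fun j' => B j - B j').prod * B j ^ t) *ᵥ D j)).symm
      rw [hsum1, hsum2, ih (t+1) (by omega), ih t (by omega), Matrix.mulVec_zero, sub_zero]
  -- Step 2 : eliminated checks, t < s
  have hlenlst : lst.length = Nset.card := Finset.length_toList _
  have hstar : ∀ t : ℕ, t < s →
      ((P i * B i ^ t) *ᵥ D i) + ∑ j ∈ R, ((P j * B j ^ t) *ᵥ D j) = 0 := by
    intro t ht
    have h1 := E1 lst t (by omega)
    have hsplit := Finset.sum_sdiff (Finset.subset_univ (insert i R))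
      (f := fun j => ((lst.map fun j' => B j - B j').prod * B j ^ t) *ᵥ D j)
    have hNzero : ∑ j ∈ Finset.univ \ insert i R,
        ((lst.map fun j' => B j - B j').prod * B j ^ t) *ᵥ D j = 0 := by
      apply Finset.sum_eq_zero
      intro j hj
      have h0 : (0 : Matrix I I F) ∈ (lst.map fun j' => B j - B j') :=
        List.mem_map.2 ⟨j, Finset.mem_toList.2 hj, sub_self _⟩
      rw [List.prod_eq_zero h0, zero_mul, Matrix.zero_mulVec]
    rw [h1, hNzero, zero_add, Finset.sum_insert hiR] at hsplit
    exact hsplit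
  -- Step 3/4 : pointwise evaluation at b with t = c b
  have hPiD : P i *ᵥ D i = 0 := by
    funext b
    have hstar' := congrFun (hstar (c b) (hc b)) b
    have hiterm : P i * B i ^ (c b) = P i := by rw [hBi, one_pow, mul_one]
    have hRzero : ∀ j ∈ R, ((P j * B j ^ (c b)) *ᵥ D j) b = 0 := by
      intro j hj
      have hcom : P j * B j ^ (c b) = B j ^ (c b) * P j := ((hcommP j (c b)).eq).symm
      rw [hcom, ← Matrix.mulVec_mulVec]
      obtain ⟨σ, hσ⟩ := hrow j hj b
      rw [hσ (P j *ᵥ D j)]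
      obtain ⟨k, hk⟩ := hgspec j hj (fold2 j b)
        (Finset.mem_image.2 ⟨b, Finset.mem_univ b, rfl⟩)
      have h0 := congrFun (hzero j hj) k
      simp only [dif_pos hj, LinearMap.pi_apply, LinearMap.comp_apply, LinearMap.proj_apply,
        Matrix.mulVecLin_apply, Pi.zero_apply] at h0
      rw [hk] at h0
      rw [h0, mul_zero]
    rw [Pi.add_apply, Finset.sum_apply, Finset.sum_eq_zero hRzero, add_zero, hiterm,
      Pi.zero_apply] at hstar'
    exact hstar'
  -- Step 5 : invert P i
  have hNc : ∀ j' ∈ lst, ∃ cf : F, B j' ^ s = cf • (1 : Matrix I I F) ∧ cf ≠ 1 :=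
    fun j' hj' => hN j' (Finset.mem_toList.1 hj')
  have listinv : ∀ (Lst : List (Fin n)),
      (∀ j' ∈ Lst, ∃ cf : F, B j' ^ s = cf • (1 : Matrix I I F) ∧ cf ≠ 1) →
      ∀ w : I → F, ((Lst.map fun j' => B i - B j').prod *ᵥ w) = 0 → w = 0 := by
    intro Lst
    induction Lst with
    | nil => intro _ w hw; simpa using hw
    | cons j'' Ltl ih =>
      intro hmem w hw
      set z := (Ltl.map fun j' => B i - B j').prod *ᵥ w with hz
      have hw' : (B i - B j'') *ᵥ z = 0 := by
        rw [List.map_cons, List.prod_cons] at hw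
        rw [hz, Matrix.mulVec_mulVec]
        exact hw
      obtain ⟨cf, hcf, hcfne⟩ := hmem j'' List.mem_cons_self
      have hz1 : z = B j'' *ᵥ z := by
        rw [hBi, Matrix.sub_mulVec, Matrix.one_mulVec, sub_eq_zero] at hw'
        exact hw'
      have hzp : ∀ p : ℕ, z = (B j'' ^ p) *ᵥ z := by
        intro p
        induction p with
        | zero => simp
        | succ p ihp =>
          calc z = (B j''^p) *ᵥ z := ihp
            _ = (B j''^p) *ᵥ (B j'' *ᵥ z) := by rw [← hz1]
            _ = (B j''^(p+1)) *ᵥ z := by rw [Matrix.mulVec_mulVec, ← pow_succ]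
      have hzs := hzp s
      rw [hcf] at hzs
      have hzsm : z = cf • z :=
        hzs.trans (by rw [Matrix.smul_mulVec, Matrix.one_mulVec])
      have h2 : (1 - cf) • z = 0 := by
        rw [sub_smul, one_smul, ← hzsm, sub_self]
      have hz0 : z = 0 := by
        rcases smul_eq_zero.1 h2 with h | h
        · exact absurd ((sub_eq_zero.1 h).symm) hcfne
        · exact h
      exact ih (fun j' hj' => hmem j' (List.mem_cons_of_mem _ hj')) w hz0
  exact listinv lst hNc (D i) hPiD

end Abstract


section Concrete

variable {F : Type*} [Field F] {n s : ℕ}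

local notation "I'" => ((Fin (n-1) → Fin s))

variable (γ : F) (lam : Fin (n - 1) → Fin s → F)
variable (A : Fin n → Matrix (Fin (n-1) → Fin s) (Fin (n-1) → Fin s) F)

/-- single step action -/
lemma step_mulVec
    (hA : ∀ (i : Fin n) (hi : (i : ℕ) < n - 1),
      A i = Matrix.of fun a b : Fin (n - 1) → Fin s =>
        if b = Function.update a ⟨i, hi⟩
            ⟨((a ⟨i, hi⟩ : ℕ) + 1) % s, Nat.mod_lt _ (a ⟨i, hi⟩).pos⟩
        then lam ⟨i, hi⟩ (a ⟨i, hi⟩) else 0)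
    (w : Fin n) (hw : (w : ℕ) < n - 1) (v : I' → F) (a : I') :
    (A w *ᵥ v) a = lam ⟨w, hw⟩ (a ⟨w, hw⟩) *
      v (Function.update a ⟨w, hw⟩ (af (a ⟨w, hw⟩) 1)) := by
  rw [hA w hw]
  simp only [Matrix.mulVec, dotProduct, Matrix.of_apply, ite_mul, zero_mul]
  rw [Finset.sum_ite_eq' Finset.univ]
  simp [af]

lemma genpow
    (hA : ∀ (i : Fin n) (hi : (i : ℕ) < n - 1),
      A i = Matrix.of fun a b : Fin (n - 1) → Fin s =>
        if b = Function.update a ⟨i, hi⟩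
            ⟨((a ⟨i, hi⟩ : ℕ) + 1) % s, Nat.mod_lt _ (a ⟨i, hi⟩).pos⟩
        then lam ⟨i, hi⟩ (a ⟨i, hi⟩) else 0)
    (w : Fin n) (hw : (w : ℕ) < n - 1) (u : ℕ) (v : I' → F) (a : I') :
    ((A w ^ u) *ᵥ v) a = (∏ h ∈ Finset.range u, lam ⟨w, hw⟩ (af (a ⟨w, hw⟩) h)) *
      v (Function.update a ⟨w, hw⟩ (af (a ⟨w, hw⟩) u)) := by
  induction u generalizing v a with
  | zero =>
    simp [af_zero]
  | succ u ih =>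
    rw [pow_succ', ← Matrix.mulVec_mulVec,
      step_mulVec lam A hA w hw ((A w ^ u) *ᵥ v) a,
      ih v (Function.update a ⟨w, hw⟩ (af (a ⟨w, hw⟩) 1)),
      Function.update_self, Function.update_idem,
      Finset.prod_range_succ']
    simp only [af_af, af_zero, Nat.add_comm 1]
    ring

lemma apow_s
    (hA : ∀ (i : Fin n) (hi : (i : ℕ) < n - 1),
      A i = Matrix.of fun a b : Fin (n - 1) → Fin s =>
        if b = Function.update a ⟨i, hi⟩
            ⟨((a ⟨i, hi⟩ : ℕ) + 1) % s, Nat.mod_lt _ (a ⟨i, hi⟩).pos⟩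
        then lam ⟨i, hi⟩ (a ⟨i, hi⟩) else 0)
    (hlam : ∀ (i : Fin (n - 1)) (u : Fin s),
      lam i u = if (u : ℕ) = 0 then γ ^ ((i : ℕ) + 1) else 1)
    (hs : 0 < s) (w : Fin n) (hw : (w : ℕ) < n - 1) :
    A w ^ s = (γ ^ ((w : ℕ) + 1)) • (1 : Matrix (Fin (n-1) → Fin s) (Fin (n-1) → Fin s) F) := by
  apply matrix_eq_of_mulVec
  intro v
  funext a
  rw [genpow lam A hA w hw s v a]
  have hafs : af (a ⟨w, hw⟩) s = a ⟨w, hw⟩ := by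
    apply Fin.ext
    simp [af_val, Nat.add_mod_right, Nat.mod_eq_of_lt (a ⟨w, hw⟩).isLt]
  rw [hafs, Function.update_eq_self]
  have hprod : ∏ h ∈ Finset.range s, lam ⟨w, hw⟩ (af (a ⟨w, hw⟩) h) = γ ^ ((w : ℕ) + 1) := by
    set x : Fin s := a ⟨w, hw⟩ with hxdef
    have hx : x.val < s := x.isLt
    have h0mem : (s - x.val) % s ∈ Finset.range s := Finset.mem_range.2 (Nat.mod_lt _ hs)
    rw [Finset.prod_eq_single ((s - x.val) % s)]
    · have hval : af x ((s - x.val) % s) = ⟨0, hs⟩ := by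
        apply Fin.ext
        simp only [af_val]
        rcases Nat.eq_zero_or_pos x.val with h | h
        · rw [h]
          simp [Nat.mod_self]
        · have h1 : (s - x.val) % s = s - x.val := Nat.mod_eq_of_lt (by omega)
          rw [h1]
          have h2 : x.val + (s - x.val) = s := by omega
          rw [h2, Nat.mod_self]
      rw [hval, hlam]
      simp
    · intro h hh hne
      have hh' : h < s := Finset.mem_range.1 hh
      rw [hlam]
      have hnz : ¬ ((af x h).val = 0) := by
        simp only [af_val]
        intro hcontra
        apply hne
        rcases Nat.lt_or_ge (x.val + h) s with hlt | hge
        · rw [Nat.mod_eq_of_lt hlt] at hcontra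
          have hx0 : x.val = 0 := by omega
          have hh0 : h = 0 := by omega
          rw [hx0, hh0, Nat.sub_zero, Nat.mod_self]
        · have h2 : x.val + h - s < s := by omega
          rw [Nat.mod_eq_sub_mod hge, Nat.mod_eq_of_lt h2] at hcontra
          have hxpos : 0 < x.val := by omega
          have h3 : (s - x.val) % s = s - x.val := Nat.mod_eq_of_lt (by omega)
          omega
      rw [if_neg hnz]
    · intro habs
      exact absurd h0mem habs
  rw [hprod]
  simp [Matrix.smul_mulVec, Matrix.one_mulVec]

lemma commA
    (hA : ∀ (i : Fin n) (hi : (i : ℕ) < n - 1),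
      A i = Matrix.of fun a b : Fin (n - 1) → Fin s =>
        if b = Function.update a ⟨i, hi⟩
            ⟨((a ⟨i, hi⟩ : ℕ) + 1) % s, Nat.mod_lt _ (a ⟨i, hi⟩).pos⟩
        then lam ⟨i, hi⟩ (a ⟨i, hi⟩) else 0)
    (w w' : Fin n) (hw : (w : ℕ) < n - 1) (hw' : (w' : ℕ) < n - 1)
    (hne : (w : ℕ) ≠ (w' : ℕ)) : A w * A w' = A w' * A w := by
  have hdig : (⟨w, hw⟩ : Fin (n-1)) ≠ ⟨w', hw'⟩ := by
    intro h
    exact hne (by simpa using congrArg Fin.val h)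
  apply matrix_eq_of_mulVec
  intro v
  funext a
  rw [← Matrix.mulVec_mulVec, ← Matrix.mulVec_mulVec]
  rw [step_mulVec lam A hA w hw, step_mulVec lam A hA w' hw',
    step_mulVec lam A hA w' hw', step_mulVec lam A hA w hw]
  rw [Function.update_of_ne hdig, Function.update_of_ne hdig.symm]
  rw [Function.update_comm hdig]
  ring

end Concrete

end C7aux

open Matrix in
/-- Construction 7 has the `d`-optimal repair property: for any node `i` and any
`d` helper nodes `R` there exist linear repair functions `φ_j : F^l → F^{l/s}`
whose values on the helper nodes determine the contents of node `i`. -/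
theorem construction7_d_optimal_repair
    (F : Type*) [Field F] [Fintype F]
    (n r d s : ℕ) (hr : 1 ≤ r) (hrn : r < n)
    (hd1 : n - r ≤ d) (hd2 : d ≤ n - 1) (hs : s = d + 1 - (n - r))
    (hF : n + 1 ≤ Fintype.card F)
    (γ : F) (hγprim : ∀ x : F, x ≠ 0 → ∃ m : ℕ, x = γ ^ m)
    (lam : Fin (n - 1) → Fin s → F)
    (hlam : ∀ (i : Fin (n - 1)) (u : Fin s),
      lam i u = if (u : ℕ) = 0 then γ ^ ((i : ℕ) + 1) else 1)
    (A : Fin n → Matrix (Fin (n - 1) → Fin s) (Fin (n - 1) → Fin s) F)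
    (hA : ∀ (i : Fin n) (hi : (i : ℕ) < n - 1),
      A i = Matrix.of fun a b : Fin (n - 1) → Fin s =>
        if b = Function.update a ⟨i, hi⟩
            ⟨((a ⟨i, hi⟩ : ℕ) + 1) % s, Nat.mod_lt _ (a ⟨i, hi⟩).pos⟩
        then lam ⟨i, hi⟩ (a ⟨i, hi⟩) else 0)
    (hAn : A ⟨n - 1, by omega⟩ = 1)
    (i : Fin n) (R : Finset (Fin n)) (hiR : i ∉ R) (hR : R.card = d) :
    ∃ φ : Fin n → (((Fin (n - 1) → Fin s) → F) →ₗ[F]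
        (Fin (s ^ (n - 1) / s) → F)),
      ∀ C C' : Fin n → (Fin (n - 1) → Fin s) → F,
        (∀ t < r, ∑ j, (A j ^ t) *ᵥ C j = 0) →
        (∀ t < r, ∑ j, (A j ^ t) *ᵥ C' j = 0) →
        (∀ j ∈ R, φ j (C j) = φ j (C' j)) →
        C i = C' i := by
  classical
  have hn2 : 2 ≤ n := by omega
  have hs0 : 0 < s := by omega
  haveI : Nonempty (Fin (n - 1) → Fin s) := ⟨fun _ => ⟨0, hs0⟩⟩
  -- γ basics
  have hγ0 : γ ≠ 0 := by
    intro h0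
    have hex : ∃ x : F, x ∉ ({0, 1} : Finset F) := by
      by_contra hall
      push_neg at hall
      have h1 : (Finset.univ : Finset F).card ≤ ({0, 1} : Finset F).card :=
        Finset.card_le_card (fun x _ => hall x)
      have h2 : ({0, 1} : Finset F).card ≤ 2 :=
        (Finset.card_insert_le _ _).trans (by simp)
      rw [Finset.card_univ] at h1
      omega
    obtain ⟨x, hx⟩ := hex
    simp only [Finset.mem_insert, Finset.mem_singleton, not_or] at hx
    obtain ⟨hx0, hx1⟩ := hx
    obtain ⟨m, hm⟩ := hγprim x hx0
    rcases Nat.eq_zero_or_pos m with h | h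
    · rw [h, pow_zero] at hm; exact hx1 hm
    · rw [h0, zero_pow (by omega)] at hm; exact hx0 hm
  have hord : ∀ c : ℕ, 0 < c → c < n → γ ^ c ≠ 1 := by
    intro c hc0 hcn h1
    have hsub : (Finset.univ.erase (0 : F)) ⊆
        (Finset.range c).image (fun k => γ ^ k) := by
      intro x hx
      obtain ⟨m, hm⟩ := hγprim x (Finset.ne_of_mem_erase hx)
      refine Finset.mem_image.2 ⟨m % c, Finset.mem_range.2 (Nat.mod_lt _ hc0), ?_⟩
      rw [hm]
      conv_rhs => rw [← Nat.div_add_mod m c]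
      rw [pow_add, pow_mul, h1, one_pow, one_mul]
    have h2 := Finset.card_le_card hsub
    rw [Finset.card_erase_of_mem (Finset.mem_univ _), Finset.card_univ] at h2
    have h3 := Finset.card_image_le (s := Finset.range c) (f := fun k => γ ^ k)
    rw [Finset.card_range] at h3
    omega
  have hpowkey : ∀ a b : ℕ, a < b → b < n → γ ^ a ≠ γ ^ b := by
    intro a b hab hbn h
    have h2 : γ ^ a * γ ^ (b - a) = γ ^ a * 1 := by
      rw [mul_one, ← pow_add, (by omega : a + (b - a) = b), ← h]
    have h3 := mul_left_cancel₀ (pow_ne_zero a hγ0) h2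
    exact hord (b - a) (by omega) (by omega) h3
  have hpowne : ∀ a b : ℕ, a < n → b < n → a ≠ b → γ ^ a ≠ γ ^ b := by
    intro a b ha hb hab
    rcases Nat.lt_or_ge a b with h | h
    · exact hpowkey a b h hb
    · intro heq
      exact hpowkey b a (by omega) ha heq.symm
  -- identity nodes
  have hA1 : ∀ j : Fin n, ¬ ((j : ℕ) < n - 1) → A j = 1 := by
    intro j hj
    have : j = (⟨n - 1, by omega⟩ : Fin n) := Fin.ext (by have := j.isLt; simp; omega)
    rw [this]
    exact hAn
  -- exponents and scalar powers
  have hAjs : ∀ j : Fin n, A j ^ s =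
      (γ ^ (if hj : (j : ℕ) < n - 1 then (j : ℕ) + 1 else 0)) •
        (1 : Matrix (Fin (n-1) → Fin s) (Fin (n-1) → Fin s) F) := by
    intro j
    by_cases hj : (j : ℕ) < n - 1
    · rw [dif_pos hj]; exact C7aux.apow_s γ lam A hA hlam hs0 j hj
    · rw [dif_neg hj, hA1 j hj, one_pow, pow_zero, one_smul]
  -- pairwise commutation
  have hAC : ∀ j j' : Fin n, Commute (A j) (A j') := by
    intro j j'
    by_cases hjj : j = j'
    · rw [hjj]
    · by_cases hj : (j : ℕ) < n - 1
      · by_cases hj' : (j' : ℕ) < n - 1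
        · exact C7aux.commA lam A hA j j' hj hj'
            (fun h => hjj (Fin.ext h))
        · rw [hA1 j' hj']; exact Commute.one_right _
      · rw [hA1 j hj]; exact Commute.one_left _
  -- message size
  have hLcard : s ^ (n - 1) / s = s ^ (n - 2) := by
    have h1 : s ^ (n - 1) = s ^ (n - 2) * s := by
      rw [← pow_succ, (by omega : n - 2 + 1 = n - 1)]
    rw [h1, Nat.mul_div_cancel _ hs0]
  have hNsetcard : (Finset.univ \ insert i R).card = n - (d + 1) := by
    rw [Finset.card_sdiff_of_subset (Finset.subset_univ _), Finset.card_insert_of_notMem hiR,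
      hR, Finset.card_univ, Fintype.card_fin]
  -- cardinality bound lemma
  have hdetcard : ∀ (S : Finset (Fin (n-1) → Fin s)) (w₀ : Fin (n-1)),
      (∀ b₁ ∈ S, ∀ b₂ ∈ S, (∀ w, w ≠ w₀ → b₁ w = b₂ w) → b₁ = b₂) →
      S.card ≤ s ^ (n - 1) / s := by
    intro S w₀ hdet
    rw [hLcard]
    have hinj : Set.InjOn (fun (b : Fin (n-1) → Fin s) =>
        (fun w : {w : Fin (n-1) // w ≠ w₀} => b w.1)) S := by
      intro b₁ h₁ b₂ h₂ h
      exact hdet b₁ h₁ b₂ h₂ (fun w hw => congrFun h ⟨w, hw⟩)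
    have hle := Finset.card_le_card_of_injOn _
      (fun b _ => Finset.mem_univ ((fun w : {w : Fin (n-1) // w ≠ w₀} => b w.1))) hinj
    rw [Finset.card_univ] at hle
    have hcardfun : Fintype.card ({w : Fin (n-1) // w ≠ w₀} → Fin s) = s ^ (n - 2) := by
      rw [Fintype.card_fun, Fintype.card_fin]
      congr 1
      have h1 : Fintype.card {w : Fin (n-1) // w ≠ w₀} = (n - 1) - 1 := by
        rw [Fintype.card_subtype_compl, Fintype.card_subtype_eq, Fintype.card_fin]
      rw [h1]; omega
    rw [hcardfun] at hle
    exact hle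
  have modfact : ∀ x₁ x₂ T : ℕ, x₁ < s → x₂ < s →
      (x₁ + T) % s = 0 → (x₂ + T) % s = 0 → x₁ = x₂ := by
    intro x₁ x₂ T h1 h2 hm1 hm2
    have hd1' := Nat.dvd_of_mod_eq_zero hm1
    have hd2' := Nat.dvd_of_mod_eq_zero hm2
    rcases Nat.le_total x₁ x₂ with h | h
    · have := Nat.dvd_sub hd2' hd1'
      have heq : x₂ + T - (x₁ + T) = x₂ - x₁ := by omega
      rw [heq] at this
      have := Nat.eq_zero_of_dvd_of_lt this
      omega
    · have := Nat.dvd_sub hd1' hd2'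
      have heq : x₁ + T - (x₂ + T) = x₁ - x₂ := by omega
      rw [heq] at this
      have := Nat.eq_zero_of_dvd_of_lt this
      omega
  have hcompl : ∀ S : ℕ, (S + (s - S % s) % s) % s = 0 := by
    intro S
    rcases Nat.eq_zero_or_pos (S % s) with h | h
    · rw [h, Nat.sub_zero, Nat.mod_self, Nat.add_zero]; exact h
    · have hm : S % s < s := Nat.mod_lt _ hs0
      have h1 : (s - S % s) % s = s - S % s := Nat.mod_eq_of_lt (by omega)
      rw [h1, Nat.add_mod, h1, show S % s + (s - S % s) = s by omega, Nat.mod_self]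
  have hsm : s + (Finset.univ \ insert i R).card ≤ r := by
    rw [hNsetcard]; omega
  by_cases hi : (i : ℕ) < n - 1
  · -- i is a shift node
    set dI : Fin (n-1) := ⟨(i : ℕ), hi⟩ with hdI
    set ei : ℕ := (i : ℕ) + 1 with hei
    have hγei : γ ^ ei ≠ 0 := pow_ne_zero _ hγ0
    have hAis : A i ^ s = (γ ^ ei) •
        (1 : Matrix (Fin (n-1) → Fin s) (Fin (n-1) → Fin s) F) :=
      C7aux.apow_s γ lam A hA hlam hs0 i hi
    set Ainv : Matrix (Fin (n-1) → Fin s) (Fin (n-1) → Fin s) F :=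
      (γ ^ ei)⁻¹ • A i ^ (s - 1) with hAinv
    have hAinvAi : Ainv * A i = 1 := by
      rw [hAinv, smul_mul_assoc, ← pow_succ, (by omega : s - 1 + 1 = s), hAis,
        smul_smul, inv_mul_cancel₀ hγei, one_smul]
    have hAinvC : ∀ j, Commute Ainv (A j) := by
      intro j
      rw [hAinv]
      exact ((hAC i j).pow_left (s-1)).smul_left _
    set B : Fin n → Matrix (Fin (n-1) → Fin s) (Fin (n-1) → Fin s) F :=
      fun j => Ainv * A j with hB
    have hBi : B i = 1 := hAinvAi
    have hBcomm : ∀ j j', B j * B j' = B j' * B j := by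
      intro j j'
      exact (Commute.mul_left ((Commute.refl Ainv).mul_right (hAinvC j'))
        (((hAinvC j).symm).mul_right (hAC j j'))).eq
    have hAinvS : Ainv ^ s = (γ ^ ei)⁻¹ •
        (1 : Matrix (Fin (n-1) → Fin s) (Fin (n-1) → Fin s) F) := by
      have h1 : Ainv ^ s * A i ^ s = 1 := by
        rw [← (hAinvC i).mul_pow, hAinvAi, one_pow]
      rw [hAis, mul_smul_comm, mul_one] at h1
      calc Ainv ^ s = (γ ^ ei)⁻¹ • ((γ ^ ei) • Ainv ^ s) := by
            rw [smul_smul, inv_mul_cancel₀ hγei, one_smul]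
        _ = (γ ^ ei)⁻¹ • 1 := by rw [h1]
    have hBjs : ∀ j : Fin n, B j ^ s
        = ((γ ^ ei)⁻¹ * γ ^ (if hj : (j : ℕ) < n-1 then (j : ℕ) + 1 else 0)) •
          (1 : Matrix (Fin (n-1) → Fin s) (Fin (n-1) → Fin s) F) := by
      intro j
      show (Ainv * A j) ^ s = _
      rw [(hAinvC j).mul_pow, hAinvS, hAjs j, smul_mul_smul_comm, one_mul]
    have hN : ∀ j ∈ Finset.univ \ insert i R,
        ∃ c : F, B j ^ s = c • (1 : Matrix (Fin (n-1) → Fin s) (Fin (n-1) → Fin s) F)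
          ∧ c ≠ 1 := by
      intro j hj
      rw [Finset.mem_sdiff, Finset.mem_insert] at hj
      push_neg at hj
      obtain ⟨-, hji, -⟩ := hj
      refine ⟨_, hBjs j, ?_⟩
      intro hcontr
      have h2 : γ ^ (if hj : (j : ℕ) < n-1 then (j : ℕ) + 1 else 0) = γ ^ ei := by
        have h3 := congrArg (fun z => (γ ^ ei) * z) hcontr
        simpa [← mul_assoc, mul_inv_cancel₀ hγei] using h3
      have hine : (i : ℕ) + 1 < n := by omega
      by_cases hj' : (j : ℕ) < n - 1
      · rw [dif_pos hj'] at h2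
        exact hpowne _ _ (by omega) (by omega)
          (by intro h; exact hji (Fin.ext (by omega))) h2
      · rw [dif_neg hj'] at h2
        exact hpowne 0 ei (by omega) (by omega) (by omega) h2
    set cfun : (Fin (n-1) → Fin s) → ℕ := fun b => ((b dI) : ℕ) with hcfun
    have hcflt : ∀ b, cfun b < s := fun b => (b dI).isLt
    set fold2 : Fin n → (Fin (n-1) → Fin s) → (Fin (n-1) → Fin s) :=
      fun j b =>
        if hj : (j : ℕ) < n - 1 then
          Function.update (Function.update b dI (C7aux.af (b dI) ((s-1) * cfun b)))
            ⟨j, hj⟩ (C7aux.af ((Function.update b dI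
              (C7aux.af (b dI) ((s-1) * cfun b))) ⟨j, hj⟩) (cfun b))
        else Function.update b dI (C7aux.af (b dI) ((s-1) * cfun b)) with hfold
    have hafz : ∀ b : Fin (n-1) → Fin s,
        C7aux.af (b dI) ((s-1) * cfun b) = (⟨0, hs0⟩ : Fin s) := by
      intro b
      apply Fin.ext
      rw [C7aux.af_val]
      have h1 : (s - 1) * cfun b = s * cfun b - cfun b := Nat.sub_one_mul _ _
      have h2 : cfun b ≤ s * cfun b := Nat.le_mul_of_pos_left _ hs0
      have hcb : cfun b = ((b dI) : ℕ) := rfl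
      have h3 : ((b dI) : ℕ) + (s-1) * cfun b = s * cfun b := by
        omega
      rw [h3, Nat.mul_mod_right]
    have hP : ∀ j ∈ R, ∀ b, (fold2 j b) dI = (⟨0, hs0⟩ : Fin s) := by
      intro j hj b
      have hne : j ≠ i := fun h => hiR (h ▸ hj)
      by_cases hj' : (j : ℕ) < n - 1
      · have hdIJ : dI ≠ (⟨(j : ℕ), hj'⟩ : Fin (n-1)) := by
          intro h
          exact hne (Fin.ext (by simpa [hdI] using congrArg Fin.val h)).symm
        simp only [hfold, dif_pos hj']
        rw [Function.update_of_ne hdIJ, Function.update_self, hafz]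
      · simp only [hfold, dif_neg hj']
        rw [Function.update_self, hafz]
    have hcard : ∀ j ∈ R, (Finset.image (fun b => fold2 j b) Finset.univ).card
        ≤ s ^ (n-1) / s := by
      intro j hj
      apply hdetcard _ dI
      intro b₁ h₁ b₂ h₂ hagree
      obtain ⟨a₁, -, rfl⟩ := Finset.mem_image.1 h₁
      obtain ⟨a₂, -, rfl⟩ := Finset.mem_image.1 h₂
      funext w
      by_cases hw : w = dI
      · rw [hw, hP j hj a₁, hP j hj a₂]
      · exact hagree w hw
    have hrow : ∀ j ∈ R, ∀ b, ∃ σ : F, ∀ v : (Fin (n-1) → Fin s) → F,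
        ((B j ^ cfun b) *ᵥ v) b = σ * v (fold2 j b) := by
      intro j hj b
      have hBt : B j ^ cfun b = ((γ ^ ei)⁻¹) ^ cfun b •
          (A i ^ ((s-1) * cfun b) * A j ^ cfun b) := by
        show (Ainv * A j) ^ cfun b = _
        rw [(hAinvC j).mul_pow, hAinv, smul_pow, ← pow_mul, smul_mul_assoc]
      by_cases hj' : (j : ℕ) < n - 1
      · refine ⟨((γ ^ ei)⁻¹) ^ cfun b *
          ((∏ h ∈ Finset.range ((s-1) * cfun b), lam dI (C7aux.af (b dI) h)) *
           (∏ h ∈ Finset.range (cfun b), lam ⟨(j : ℕ), hj'⟩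
             (C7aux.af ((Function.update b dI
               (C7aux.af (b dI) ((s-1) * cfun b))) ⟨(j : ℕ), hj'⟩) h))), ?_⟩
        intro v
        rw [hBt, Matrix.smul_mulVec, ← Matrix.mulVec_mulVec, Pi.smul_apply,
          smul_eq_mul, C7aux.genpow lam A hA i hi ((s-1) * cfun b) ((A j ^ cfun b) *ᵥ v) b,
          C7aux.genpow lam A hA j hj' (cfun b) v
            (Function.update b dI (C7aux.af (b dI) ((s-1) * cfun b)))]
        simp only [hfold, dif_pos hj']
        rw [hdI]
        ring
      · refine ⟨((γ ^ ei)⁻¹) ^ cfun b *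
          (∏ h ∈ Finset.range ((s-1) * cfun b), lam dI (C7aux.af (b dI) h)), ?_⟩
        intro v
        rw [hBt, hA1 j hj', one_pow, mul_one, Matrix.smul_mulVec, Pi.smul_apply,
          smul_eq_mul, C7aux.genpow lam A hA i hi ((s-1) * cfun b) v b]
        simp only [hfold, dif_neg hj']
        rw [hdI]
        ring
    obtain ⟨φ, hφ⟩ := C7aux.abstract_repair (r := r) B i R hiR hBcomm hBi hN
      fold2 cfun hcflt hrow hcard hsm
    refine ⟨φ, ?_⟩
    intro C C' hC hC' hagree
    have hD : ∀ t < r, ∑ j, (A j ^ t) *ᵥ (C j - C' j) = 0 := by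
      intro t ht
      have heq : ∑ j, ((A j ^ t) *ᵥ (C j - C' j))
          = ∑ j, ((A j ^ t) *ᵥ C j - (A j ^ t) *ᵥ C' j) :=
        Finset.sum_congr rfl fun j _ => Matrix.mulVec_sub _ _ _
      rw [heq, Finset.sum_sub_distrib, hC t ht, hC' t ht, sub_zero]
    have hDB : ∀ t < r, ∑ j, (B j ^ t) *ᵥ (C j - C' j) = 0 := by
      intro t ht
      have h1 : ∀ j : Fin n, (B j) ^ t *ᵥ (C j - C' j)
          = Ainv ^ t *ᵥ ((A j ^ t) *ᵥ (C j - C' j)) := by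
        intro j
        show (Ainv * A j) ^ t *ᵥ _ = _
        rw [(hAinvC j).mul_pow, Matrix.mulVec_mulVec]
      calc ∑ j, (B j ^ t) *ᵥ (C j - C' j)
          = ∑ j, Ainv ^ t *ᵥ ((A j ^ t) *ᵥ (C j - C' j)) :=
            Finset.sum_congr rfl fun j _ => h1 j
        _ = Ainv ^ t *ᵥ (∑ j, (A j ^ t) *ᵥ (C j - C' j)) :=
            (C7aux.mulVec_sum' _ _ _).symm
        _ = 0 := by rw [hD t ht, Matrix.mulVec_zero]
    have hzero : ∀ j ∈ R, φ j (C j - C' j) = 0 := by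
      intro j hj
      rw [map_sub, hagree j hj, sub_self]
    exact sub_eq_zero.mp (hφ (fun j => C j - C' j) hDB hzero)
  · -- i is the identity node
    set cfun : (Fin (n-1) → Fin s) → ℕ :=
      fun b => (s - (∑ w : Fin (n-1), ((b w) : ℕ)) % s) % s with hcfun
    have hcflt : ∀ b, cfun b < s := fun b => Nat.mod_lt _ hs0
    have hjR : ∀ j ∈ R, (j : ℕ) < n - 1 := by
      intro j hj
      have hne : j ≠ i := fun h => hiR (h ▸ hj)
      have hji : (j : ℕ) ≠ (i : ℕ) := fun h => hne (Fin.ext h)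
      have h1 := j.isLt
      have h2 := i.isLt
      omega
    set fold2 : Fin n → (Fin (n-1) → Fin s) → (Fin (n-1) → Fin s) :=
      fun j b => if hj : (j : ℕ) < n - 1 then
        Function.update b ⟨j, hj⟩ (C7aux.af (b ⟨j, hj⟩) (cfun b)) else b with hfold
    -- the image property
    have himgP : ∀ j ∈ R, ∀ b, (∑ w, ((fold2 j b w) : ℕ)) % s = 0 := by
      intro j hj b
      have hj' := hjR j hj
      simp only [hfold, dif_pos hj']
      set J : Fin (n-1) := ⟨j, hj'⟩ with hJ
      set y := C7aux.af (b J) (cfun b) with hy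
      have hsplit : ∑ w, ((Function.update b J y w : ℕ))
          = (y : ℕ) + ∑ w ∈ Finset.univ.erase J, ((b w : ℕ)) := by
        rw [← Finset.add_sum_erase Finset.univ
          (fun w => ((Function.update b J y w) : ℕ)) (Finset.mem_univ J)]
        congr 1
        · rw [Function.update_self]
        · exact Finset.sum_congr rfl (fun w hw => by
            rw [Function.update_of_ne (Finset.ne_of_mem_erase hw)])
      rw [hsplit, hy, C7aux.af_val, Nat.mod_add_mod]
      have h1 : ∑ w, ((b w : ℕ)) = (b J : ℕ)
          + ∑ w ∈ Finset.univ.erase J, ((b w : ℕ)) :=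
        (Finset.add_sum_erase Finset.univ (fun w => ((b w) : ℕ)) (Finset.mem_univ _)).symm
      rw [show ((b J : ℕ) + cfun b + ∑ w ∈ Finset.univ.erase J, ((b w : ℕ)))
          = (∑ w, ((b w) : ℕ)) + cfun b by omega]
      exact hcompl _
    have hcard : ∀ j ∈ R, (Finset.image (fun b => fold2 j b) Finset.univ).card
        ≤ s ^ (n-1) / s := by
      intro j hj
      apply hdetcard _ (⟨j, hjR j hj⟩ : Fin (n-1))
      intro b₁ h₁ b₂ h₂ hagree
      obtain ⟨a₁, _, rfl⟩ := Finset.mem_image.1 h₁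
      obtain ⟨a₂, _, rfl⟩ := Finset.mem_image.1 h₂
      have hP₁ := himgP j hj a₁
      have hP₂ := himgP j hj a₂
      set J : Fin (n-1) := ⟨j, hjR j hj⟩
      have hT : ∑ w ∈ Finset.univ.erase J, ((fold2 j a₁ w) : ℕ)
          = ∑ w ∈ Finset.univ.erase J, ((fold2 j a₂ w) : ℕ) :=
        Finset.sum_congr rfl (fun w hw => by
          rw [hagree w (Finset.ne_of_mem_erase hw)])
      have hs₁ : ((fold2 j a₁ J : ℕ) + ∑ w ∈ Finset.univ.erase J, ((fold2 j a₁ w) : ℕ)) % s = 0 := by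
        rw [Finset.add_sum_erase Finset.univ (fun w => ((fold2 j a₁ w) : ℕ)) (Finset.mem_univ J)]
        exact hP₁
      have hs₂ : ((fold2 j a₂ J : ℕ) + ∑ w ∈ Finset.univ.erase J, ((fold2 j a₂ w) : ℕ)) % s = 0 := by
        rw [Finset.add_sum_erase Finset.univ (fun w => ((fold2 j a₂ w) : ℕ)) (Finset.mem_univ J)]
        exact hP₂
      rw [← hT] at hs₂
      have hval := modfact _ _ _ (fold2 j a₁ J).isLt (fold2 j a₂ J).isLt hs₁ hs₂
      funext w
      by_cases hw : w = J
      · rw [hw]; exact Fin.ext hval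
      · exact hagree w hw
    have hrow : ∀ j ∈ R, ∀ b, ∃ σ : F, ∀ v : (Fin (n-1) → Fin s) → F,
        ((A j ^ (cfun b)) *ᵥ v) b = σ * v (fold2 j b) := by
      intro j hj b
      have hj' := hjR j hj
      refine ⟨∏ h ∈ Finset.range (cfun b), lam ⟨j, hj'⟩ (C7aux.af (b ⟨j, hj'⟩) h), ?_⟩
      intro v
      rw [C7aux.genpow lam A hA j hj' (cfun b) v b]
      simp only [hfold, dif_pos hj']
    have hN : ∀ j ∈ Finset.univ \ insert i R,
        ∃ c : F, A j ^ s = c • (1 : Matrix (Fin (n-1) → Fin s) (Fin (n-1) → Fin s) F)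
          ∧ c ≠ 1 := by
      intro j hj
      rw [Finset.mem_sdiff, Finset.mem_insert] at hj
      push_neg at hj
      obtain ⟨-, hji, _⟩ := hj
      have hj' : (j : ℕ) < n - 1 := by
        have h1 := j.isLt
        have h2 : (j : ℕ) ≠ (i : ℕ) := fun h => hji (Fin.ext h)
        omega
      refine ⟨γ ^ ((j : ℕ) + 1), ?_, ?_⟩
      · have := hAjs j
        rwa [dif_pos hj'] at this
      · exact hord ((j : ℕ) + 1) (by omega) (by omega)
    obtain ⟨φ, hφ⟩ := C7aux.abstract_repair (r := r) A i R hiR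
      (fun j j' => (hAC j j').eq) (hA1 i hi) hN fold2 cfun hcflt hrow hcard hsm
    refine ⟨φ, ?_⟩
    intro C C' hC hC' hagree
    have hD : ∀ t < r, ∑ j, (A j ^ t) *ᵥ (C j - C' j) = 0 := by
      intro t ht
      have heq : ∑ j, ((A j ^ t) *ᵥ (C j - C' j))
          = ∑ j, ((A j ^ t) *ᵥ C j - (A j ^ t) *ᵥ C' j) :=
        Finset.sum_congr rfl fun j _ => Matrix.mulVec_sub _ _ _
      rw [heq, Finset.sum_sub_distrib, hC t ht, hC' t ht, sub_zero]
    have hzero : ∀ j ∈ R, φ j (C j - C' j) = 0 := by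
      intro j hj
      rw [map_sub, hagree j hj, sub_self]
    exact sub_eq_zero.mp (hφ (fun j => C j - C' j) hD hzero)
end
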